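/- arXiv:1002.0368 — 2 statements merged into one kernel-verified Lean document; each statement's English description precedes it below -/
import Mathlib

section
/- Let H_S and A be n×n complex Hermitian matrices and let v be a unit vector in ℂ^n with H_S v = s0·v and A v = a0·v for real numbers s0, a0. Let δ be real, e0, e1 the standard basis of ℂ², H_P = δ·|e1⟩⟨e1|, H2 = H_S ⊗ I_2 + I_n ⊗ H_P + A ⊗ |e1⟩⟨e1|, and let 𝗛 = (1/√2)·[[1,1],[1,−1]] be the Hadamard matrix on ℂ². Define φ(t) = (I_n ⊗ 𝗛) · exp(−i t H2) · (I_n ⊗ 𝗛) · (v ⊗ e0). Then the probability of finding the probe in state e0, namely ‖(I_n ⊗ |e0⟩⟨e0|) φ(t)‖², equals cos²(ω t / 2) = (1 + cos(ω t))/2, where ω = a0 + δ. -/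
open Matrix Kronecker

/-- The Kronecker (tensor) product of two vectors. -/
def vecKron {K L : Type*} (v : K → ℂ) (w : L → ℂ) : K × L → ℂ :=
  fun p => v p.1 * w p.2

/-- The first standard basis vector of `ℂ²`. -/
def e0 : Fin 2 → ℂ := ![1, 0]

def e1' : Fin 2 → ℂ := ![0, 1]

/-- The rank-one projection `|e0⟩⟨e0|` onto the first standard basis vector of `ℂ²`. -/
def projE0 : Matrix (Fin 2) (Fin 2) ℂ := !![1, 0; 0, 0]

/-- The rank-one projection `|e1⟩⟨e1|` onto the second standard basis vector of `ℂ²`. -/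
def projE1 : Matrix (Fin 2) (Fin 2) ℂ := !![0, 0; 0, 1]

/-- The Hadamard matrix on `ℂ²`. -/
noncomputable def hadamard2 : Matrix (Fin 2) (Fin 2) ℂ :=
  ((Real.sqrt 2 : ℂ))⁻¹ • !![1, 1; 1, -1]

attribute [local instance] Matrix.linftyOpNormedRing Matrix.linftyOpNormedAlgebra
  Matrix.linftyOpNormedAddCommGroup

open NormedSpace in
lemma exp_mulVec_eigen {m : Type*} [Fintype m] [DecidableEq m]
    (M : Matrix m m ℂ) (x : m → ℂ) (μ : ℂ) (h : M.mulVec x = μ • x) :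
    (exp M).mulVec x = Complex.exp μ • x := by
  have hpow : ∀ k : ℕ, (M ^ k).mulVec x = μ ^ k • x := by
    intro k
    induction k with
    | zero => simp
    | succ k ih =>
      rw [pow_succ, ← Matrix.mulVec_mulVec, h, Matrix.mulVec_smul, ih, smul_smul, pow_succ,
        mul_comm]
  let L : Matrix m m ℂ →L[ℂ] (m → ℂ) :=
    LinearMap.toContinuousLinearMap
      { toFun := fun N => N.mulVec x
        map_add' := fun a b => Matrix.add_mulVec a b x
        map_smul' := fun c a => by simp [Matrix.smul_mulVec] }
  have hL : ∀ N : Matrix m m ℂ, L N = N.mulVec x := fun N => rfl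
  have hs : Summable (fun k : ℕ => (k.factorial : ℂ)⁻¹ • M ^ k) :=
    expSeries_summable' (𝕂 := ℂ) M
  rw [exp_eq_tsum (𝕂 := ℂ), ← hL, L.map_tsum hs]
  simp only [hL]
  have : ∀ k : ℕ, ((k.factorial : ℂ)⁻¹ • M ^ k).mulVec x = ((k.factorial : ℂ)⁻¹ * μ ^ k) • x := by
    intro k
    rw [Matrix.smul_mulVec, hpow, smul_smul]
  have hexp : Complex.exp μ = ∑' k : ℕ, (k.factorial : ℂ)⁻¹ * μ ^ k := by
    rw [Complex.exp_eq_exp_ℂ, exp_eq_tsum (𝕂 := ℂ)]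
    exact tsum_congr fun k => rfl
  rw [tsum_congr this, Summable.tsum_smul_const, ← hexp]
  simpa [smul_eq_mul] using expSeries_summable' (𝕂 := ℂ) μ

lemma kron_mulVec {K L : Type*} [Fintype K] [Fintype L]
    (M : Matrix K K ℂ) (N : Matrix L L ℂ) (x : K → ℂ) (y : L → ℂ) :
    (M ⊗ₖ N).mulVec (vecKron x y) = vecKron (M.mulVec x) (N.mulVec y) := by
  ext ⟨i, j⟩
  simp only [Matrix.mulVec, dotProduct, vecKron, kroneckerMap_apply, Fintype.sum_prod_type]
  rw [Finset.sum_mul_sum]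
  exact Finset.sum_congr rfl fun k _ => Finset.sum_congr rfl fun l _ => by ring

lemma vecKron_smul_right {K L : Type*} (v : K → ℂ) (c : ℂ) (w : L → ℂ) :
    vecKron v (c • w) = c • vecKron v w := by
  funext p; simp [vecKron]; ring

lemma vecKron_add_right {K L : Type*} (v : K → ℂ) (w w' : L → ℂ) :
    vecKron v (w + w') = vecKron v w + vecKron v w' := by
  funext p; simp [vecKron]; ring

lemma vecKron_smul_left {K L : Type*} (c : ℂ) (v : K → ℂ) (w : L → ℂ) :
    vecKron (c • v) w = c • vecKron v w := by
  funext p; simp [vecKron]; ring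

lemma vecKron_zero_right {K L : Type*} (v : K → ℂ) :
    vecKron v (0 : L → ℂ) = 0 := by
  funext p; simp [vecKron]

lemma had_e0 : hadamard2.mulVec e0 = ((Real.sqrt 2 : ℂ))⁻¹ • (e0 + e1') := by
  funext i
  fin_cases i <;> simp [hadamard2, Matrix.mulVec, dotProduct, Fin.sum_univ_two, e0, e1']

lemma had_e1 : hadamard2.mulVec e1' = ((Real.sqrt 2 : ℂ))⁻¹ • (e0 - e1') := by
  funext i
  fin_cases i <;> simp [hadamard2, Matrix.mulVec, dotProduct, Fin.sum_univ_two, e0, e1']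

lemma projE0_e0 : projE0.mulVec e0 = e0 := by
  funext i
  fin_cases i <;> simp [projE0, Matrix.mulVec, dotProduct, Fin.sum_univ_two, e0]

lemma projE0_e1 : projE0.mulVec e1' = 0 := by
  funext i
  fin_cases i <;> simp [projE0, Matrix.mulVec, dotProduct, Fin.sum_univ_two, e1']

lemma projE1_e0 : projE1.mulVec e0 = 0 := by
  funext i
  fin_cases i <;> simp [projE1, Matrix.mulVec, dotProduct, Fin.sum_univ_two, e0]

lemma projE1_e1 : projE1.mulVec e1' = e1' := by
  funext i
  fin_cases i <;> simp [projE1, Matrix.mulVec, dotProduct, Fin.sum_univ_two, e1']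

lemma exp_I_add_exp_neg_I (x : ℝ) :
    Complex.exp ((x : ℂ) * Complex.I) + Complex.exp (-((x : ℂ) * Complex.I)) =
      2 * (Real.cos x : ℂ) := by
  rw [Complex.exp_mul_I, ← neg_mul, Complex.exp_mul_I, Complex.cos_neg, Complex.sin_neg,
    Complex.ofReal_cos]
  ring

lemma vecKron_sub_right {K L : Type*} (v : K → ℂ) (w w' : L → ℂ) :
    vecKron v (w - w') = vecKron v w - vecKron v w' := by
  funext p; simp [vecKron]; ring

/-- with `H2 = H_S ⊗ I₂ + I_n ⊗ δ|e1⟩⟨e1| + A ⊗ |e1⟩⟨e1|` and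
`φ(t) = (I ⊗ 𝗛) exp(-itH2) (I ⊗ 𝗛) (v ⊗ e0)`, the probability of finding the probe in
state `e0` is `‖(I ⊗ |e0⟩⟨e0|) φ(t)‖² = cos²(ωt/2) = (1 + cos(ωt))/2` where `ω = a0 + δ`. -/
theorem probe_measurement_probability {n : ℕ}
    (HS A : Matrix (Fin n) (Fin n) ℂ) (v : Fin n → ℂ) (s0 a0 δ : ℝ)
    (hHS : HS.IsHermitian) (hA : A.IsHermitian)
    (hv : star v ⬝ᵥ v = 1)
    (hvS : HS.mulVec v = (s0 : ℂ) • v)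
    (hvA : A.mulVec v = (a0 : ℂ) • v)
    (t : ℝ) :
    (∑ p : Fin n × Fin 2, Complex.normSq
      ((((1 : Matrix (Fin n) (Fin n) ℂ) ⊗ₖ projE0).mulVec
        (((1 : Matrix (Fin n) (Fin n) ℂ) ⊗ₖ hadamard2).mulVec
          ((NormedSpace.exp ((-(Complex.I) * (t : ℂ)) •
              (HS ⊗ₖ (1 : Matrix (Fin 2) (Fin 2) ℂ)
                + (1 : Matrix (Fin n) (Fin n) ℂ) ⊗ₖ ((δ : ℂ) • projE1)
                + A ⊗ₖ projE1))).mulVec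
            (((1 : Matrix (Fin n) (Fin n) ℂ) ⊗ₖ hadamard2).mulVec (vecKron v e0))))) p))
      = Real.cos ((a0 + δ) * t / 2) ^ 2 ∧
    Real.cos ((a0 + δ) * t / 2) ^ 2 = (1 + Real.cos ((a0 + δ) * t)) / 2 := by
  have half : Real.cos ((a0 + δ) * t / 2) ^ 2 = (1 + Real.cos ((a0 + δ) * t)) / 2 := by
    have h2 : 2 * ((a0 + δ) * t / 2) = (a0 + δ) * t := by ring
    rw [Real.cos_sq, h2]; ring
  refine ⟨?_, half⟩
  rw [half]
  set c : ℂ := -(Complex.I) * (t : ℂ) with hc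
  set H2 : Matrix (Fin n × Fin 2) (Fin n × Fin 2) ℂ :=
    HS ⊗ₖ (1 : Matrix (Fin 2) (Fin 2) ℂ)
      + (1 : Matrix (Fin n) (Fin n) ℂ) ⊗ₖ ((δ : ℂ) • projE1)
      + A ⊗ₖ projE1 with hH2
  set r : ℂ := ((Real.sqrt 2 : ℂ))⁻¹ with hrdef
  have hr2 : r * r = 2⁻¹ := by
    rw [hrdef, ← mul_inv, ← Complex.ofReal_mul, Real.mul_self_sqrt (by norm_num)]
    norm_num
  set μ1 : ℂ := (s0 : ℂ) + (δ : ℂ) + (a0 : ℂ) with hμ1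
  -- eigenvector equations
  have hH0 : H2.mulVec (vecKron v e0) = (s0 : ℂ) • vecKron v e0 := by
    rw [hH2, Matrix.add_mulVec, Matrix.add_mulVec, kron_mulVec, kron_mulVec, kron_mulVec, hvS,
      Matrix.one_mulVec, Matrix.one_mulVec, Matrix.smul_mulVec, projE1_e0,
      vecKron_smul_left, smul_zero, vecKron_zero_right, vecKron_zero_right, add_zero, add_zero]
  have hH1 : H2.mulVec (vecKron v e1') = μ1 • vecKron v e1' := by
    rw [hH2, Matrix.add_mulVec, Matrix.add_mulVec, kron_mulVec, kron_mulVec, kron_mulVec, hvS,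
      hvA, Matrix.one_mulVec, Matrix.one_mulVec, Matrix.smul_mulVec, projE1_e1,
      vecKron_smul_left, vecKron_smul_left, vecKron_smul_right, hμ1, ← add_smul, ← add_smul]
  have hE0 : (NormedSpace.exp (c • H2)).mulVec (vecKron v e0)
      = Complex.exp (c * s0) • vecKron v e0 :=
    exp_mulVec_eigen _ _ _ (by rw [Matrix.smul_mulVec, hH0, smul_smul])
  have hE1 : (NormedSpace.exp (c • H2)).mulVec (vecKron v e1')
      = Complex.exp (c * μ1) • vecKron v e1' :=
    exp_mulVec_eigen _ _ _ (by rw [Matrix.smul_mulVec, hH1, smul_smul])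
  -- hadamard / projection actions on the tensor factors
  have hHad0 : ((1 : Matrix (Fin n) (Fin n) ℂ) ⊗ₖ hadamard2).mulVec (vecKron v e0)
      = r • (vecKron v e0 + vecKron v e1') := by
    rw [kron_mulVec, Matrix.one_mulVec, had_e0, vecKron_smul_right, vecKron_add_right]
  have hHad1 : ((1 : Matrix (Fin n) (Fin n) ℂ) ⊗ₖ hadamard2).mulVec (vecKron v e1')
      = r • (vecKron v e0 - vecKron v e1') := by
    rw [kron_mulVec, Matrix.one_mulVec, had_e1, vecKron_smul_right, vecKron_sub_right]
  have hP0 : ((1 : Matrix (Fin n) (Fin n) ℂ) ⊗ₖ projE0).mulVec (vecKron v e0) = vecKron v e0 := by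
    rw [kron_mulVec, Matrix.one_mulVec, projE0_e0]
  have hP1 : ((1 : Matrix (Fin n) (Fin n) ℂ) ⊗ₖ projE0).mulVec (vecKron v e1') = 0 := by
    rw [kron_mulVec, Matrix.one_mulVec, projE0_e1, vecKron_zero_right]
  set g : ℂ := 2⁻¹ * (Complex.exp (c * s0) + Complex.exp (c * μ1)) with hg
  have key : (((1 : Matrix (Fin n) (Fin n) ℂ) ⊗ₖ projE0).mulVec
        (((1 : Matrix (Fin n) (Fin n) ℂ) ⊗ₖ hadamard2).mulVec
          ((NormedSpace.exp (c • H2)).mulVec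
            (((1 : Matrix (Fin n) (Fin n) ℂ) ⊗ₖ hadamard2).mulVec (vecKron v e0)))))
      = g • vecKron v e0 := by
    simp only [Matrix.mulVec_smul, Matrix.mulVec_add, Matrix.mulVec_sub, hE0, hE1, hHad0,
      hHad1, hP0, hP1, smul_zero, add_zero, sub_zero]
    rw [hg, show (2⁻¹ : ℂ) = r * r from hr2.symm]
    module
  rw [key]
  -- the total probability is ‖g‖²
  have hv' : ∑ j, Complex.normSq (v j) = 1 := by
    have : ((∑ j, Complex.normSq (v j) : ℝ) : ℂ) = 1 := by
      push_cast
      rw [← hv]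
      simp [dotProduct, Complex.normSq_eq_conj_mul_self]
    exact_mod_cast this
  have hsum : ∑ p : Fin n × Fin 2, Complex.normSq ((g • vecKron v e0) p)
      = Complex.normSq g := by
    simp only [Pi.smul_apply, smul_eq_mul, vecKron, Complex.normSq_mul]
    rw [Fintype.sum_prod_type]
    simp only [Fin.sum_univ_two, e0]
    simp only [Matrix.cons_val_zero, Matrix.cons_val_one, Matrix.head_cons]
    simp only [Complex.normSq_one, Complex.normSq_zero, mul_one, mul_zero, add_zero]
    rw [← Finset.mul_sum, hv', mul_one]
  rw [hsum]
  -- compute ‖g‖²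
  have hx0 : c * (s0 : ℂ) = ((-(s0 * t) : ℝ) : ℂ) * Complex.I := by
    rw [hc]; push_cast; ring
  have hx1 : c * μ1 = ((-((s0 + δ + a0) * t) : ℝ) : ℂ) * Complex.I := by
    rw [hc, hμ1]; push_cast; ring
  rw [hg, hx0, hx1, Complex.normSq_mul]
  have habs : ∀ x : ℝ, Complex.normSq (Complex.exp ((x : ℂ) * Complex.I)) = 1 := by
    intro x
    rw [Complex.normSq_eq_norm_sq, Complex.norm_exp_ofReal_mul_I]
    norm_num
  rw [Complex.normSq_add, habs, habs]
  have hcross : (Complex.exp (((-(s0 * t) : ℝ) : ℂ) * Complex.I) *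
      (starRingEnd ℂ) (Complex.exp (((-((s0 + δ + a0) * t) : ℝ) : ℂ) * Complex.I))).re
      = Real.cos ((a0 + δ) * t) := by
    rw [← Complex.exp_conj, map_mul (starRingEnd ℂ), Complex.conj_ofReal, Complex.conj_I, mul_neg,
      ← Complex.exp_add]
    have : ((-(s0 * t) : ℝ) : ℂ) * Complex.I + -(((-((s0 + δ + a0) * t) : ℝ) : ℂ) * Complex.I)
        = (((a0 + δ) * t : ℝ) : ℂ) * Complex.I := by push_cast; ring
    rw [this, Complex.exp_ofReal_mul_I_re]
  rw [hcross]
  have : Complex.normSq (2⁻¹ : ℂ) = 4⁻¹ := by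
    simp [Complex.normSq_apply]
    norm_num
  rw [this]
  ring
end

section
/- Let H_S and A be commuting n×n complex Hermitian matrices and let (v_j)_{j=1}^n be an orthonormal basis of ℂ^n of simultaneous eigenvectors, H_S v_j = s_j v_j and A v_j = a_j v_j. Let δ be real, e0, e1 the standard basis of ℂ², H_P = δ·|e1⟩⟨e1|, H2 = H_S ⊗ I_2 + I_n ⊗ H_P + A ⊗ |e1⟩⟨e1|, and 𝗛 the Hadamard matrix on ℂ². Let ρ_S be an n×n density matrix, let a ∈ [0,1], and set ρ0 = ρ_S ⊗ diag(a, 1−a). Define U(t) = (I_n ⊗ 𝗛) · exp(−i t H2) · (I_n ⊗ 𝗛) and ρ1(t) = U(t) ρ0 U(t)*. Then the probability of finding the probe in e0 satisfies Tr((I_n ⊗ |e0⟩⟨e0|) ρ1(t)) = (1/2)·(1 + (2a − 1) · Σ_{j=1}^n ⟨v_j, ρ_S v_j⟩ · cos((a_j + δ) t)). -/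
open Matrix Kronecker
open scoped ComplexOrder

/-- `H2 = H_S ⊗ I₂ + I_n ⊗ δ|e1⟩⟨e1| + A ⊗ |e1⟩⟨e1|`. -/
noncomputable def H2mat {n : ℕ} (HS A : Matrix (Fin n) (Fin n) ℂ) (δ : ℝ) :
    Matrix (Fin n × Fin 2) (Fin n × Fin 2) ℂ :=
  HS ⊗ₖ (1 : Matrix (Fin 2) (Fin 2) ℂ)
    + (1 : Matrix (Fin n) (Fin n) ℂ) ⊗ₖ ((δ : ℂ) • projE1)
    + A ⊗ₖ projE1

/-- `U(t) = (I ⊗ 𝗛) exp(-itH2) (I ⊗ 𝗛)`. -/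
noncomputable def Umat {n : ℕ} (HS A : Matrix (Fin n) (Fin n) ℂ) (δ t : ℝ) :
    Matrix (Fin n × Fin 2) (Fin n × Fin 2) ℂ :=
  ((1 : Matrix (Fin n) (Fin n) ℂ) ⊗ₖ hadamard2)
    * NormedSpace.exp ((-(Complex.I) * (t : ℂ)) • H2mat HS A δ)
    * ((1 : Matrix (Fin n) (Fin n) ℂ) ⊗ₖ hadamard2)

lemma aux_kron_conjT {l m p q : Type*} (A : Matrix l m ℂ) (B : Matrix p q ℂ) :
    (A ⊗ₖ B)ᴴ = Aᴴ ⊗ₖ Bᴴ := by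
  ext ⟨i, j⟩ ⟨k, l'⟩
  simp [Matrix.conjTranspose_apply, mul_comm]

lemma aux_trace_dmd {n : ℕ} (u w : Fin n → ℂ) (R : Matrix (Fin n) (Fin n) ℂ) :
    (Matrix.diagonal u * R * Matrix.diagonal w).trace = ∑ j, u j * R j j * w j := by
  simp [Matrix.trace, Matrix.diag, Matrix.mul_diagonal, Matrix.diagonal_mul]

lemma aux_inv2 : ((Real.sqrt 2 : ℂ))⁻¹ * ((Real.sqrt 2 : ℂ))⁻¹ = (2:ℂ)⁻¹ := by
  have h : ((Real.sqrt 2 : ℂ)) * ((Real.sqrt 2 : ℂ)) = 2 := by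
    norm_cast
    rw [Real.mul_self_sqrt (by norm_num)]
  rw [← mul_inv, h]

/-- explicit form of `𝗛 |e0⟩⟨e0| 𝗛` -/
lemma aux_X0 : hadamard2 * projE0 * hadamard2
    = !![(2:ℂ)⁻¹, (2:ℂ)⁻¹; (2:ℂ)⁻¹, (2:ℂ)⁻¹] := by
  rw [hadamard2, Matrix.smul_mul, Matrix.mul_smul, Matrix.smul_mul, smul_smul, aux_inv2]
  ext i j
  fin_cases i <;> fin_cases j <;>
    simp [projE0, Matrix.mul_apply, Fin.sum_univ_two]

/-- explicit form of `𝗛 |e1⟩⟨e1| 𝗛` -/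
lemma aux_X1 : hadamard2 * projE1 * hadamard2
    = !![(2:ℂ)⁻¹, -(2:ℂ)⁻¹; -(2:ℂ)⁻¹, (2:ℂ)⁻¹] := by
  rw [hadamard2, Matrix.smul_mul, Matrix.mul_smul, Matrix.smul_mul, smul_smul, aux_inv2]
  ext i j
  fin_cases i <;> fin_cases j <;>
    simp [projE1, Matrix.mul_apply, Fin.sum_univ_two]

lemma aux_exp_mul_star (z w : ℂ) :
    Complex.exp z * star (Complex.exp w) = Complex.exp (z + star w) := by
  rw [Complex.star_def, ← Complex.exp_conj, ← Complex.exp_add]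

/-- for commuting Hermitian `H_S`, `A` with orthonormal simultaneous
eigenbasis `v j` (`H_S v_j = s_j v_j`, `A v_j = a_j v_j`), probe Hamiltonian
`δ|e1⟩⟨e1|`, initial state `ρ0 = ρ_S ⊗ diag(a, 1-a)` (`ρ_S` a density matrix,
`a ∈ [0,1]`) and `ρ1(t) = U(t) ρ0 U(t)*` with `U(t) = (I ⊗ 𝗛) exp(-itH2) (I ⊗ 𝗛)`:
`Tr((I ⊗ |e0⟩⟨e0|) ρ1(t)) = (1/2)(1 + (2a-1) Σ_j ⟨v_j, ρ_S v_j⟩ cos((a_j+δ)t))`. -/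
theorem probe_probability_mixed_state {n : ℕ}
    (HS A : Matrix (Fin n) (Fin n) ℂ)
    (hHS : HS.IsHermitian) (hA : A.IsHermitian) (hcomm : A * HS = HS * A)
    (v : Fin n → (Fin n → ℂ)) (s a : Fin n → ℝ)
    (hortho : ∀ j k : Fin n, star (v j) ⬝ᵥ v k = if j = k then 1 else 0)
    (hvS : ∀ j, HS.mulVec (v j) = (s j : ℂ) • v j)
    (hvA : ∀ j, A.mulVec (v j) = (a j : ℂ) • v j)
    (δ : ℝ)
    (ρS : Matrix (Fin n) (Fin n) ℂ)
    (hρ : ρS.PosSemidef) (hρtr : ρS.trace = 1)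
    (aa : ℝ) (haa0 : 0 ≤ aa) (haa1 : aa ≤ 1)
    (t : ℝ) :
    (((1 : Matrix (Fin n) (Fin n) ℂ) ⊗ₖ projE0
        * (Umat HS A δ t * (ρS ⊗ₖ !![(aa : ℂ), 0; 0, 1 - (aa : ℂ)])
            * (Umat HS A δ t)ᴴ)).trace
      = (1 / 2 : ℂ) * (1 + ((2 * aa - 1 : ℝ) : ℂ)
          * ∑ j : Fin n, (star (v j) ⬝ᵥ ρS.mulVec (v j))
              * ((Real.cos ((a j + δ) * t) : ℝ) : ℂ))) := by
  classical
  -- the unitary of eigenvectors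
  set V : Matrix (Fin n) (Fin n) ℂ := Matrix.of fun i j => v j i with hVdef
  have hVhV : Vᴴ * V = 1 := by
    ext j k
    have := hortho j k
    simpa [Matrix.mul_apply, Matrix.conjTranspose_apply, dotProduct, Matrix.one_apply,
      hVdef] using this
  have hVVh : V * Vᴴ = 1 := mul_eq_one_comm.mp hVhV
  have hdiag : ∀ (B : Matrix (Fin n) (Fin n) ℂ) (c : Fin n → ℝ),
      (∀ j, B.mulVec (v j) = (c j : ℂ) • v j) →
      B = V * Matrix.diagonal (fun j => (c j : ℂ)) * Vᴴ := by
    intro B c hvB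
    have hBV : B * V = V * Matrix.diagonal (fun j => (c j : ℂ)) := by
      ext i j
      have := congrFun (hvB j) i
      simp only [Matrix.mulVec, dotProduct, Pi.smul_apply, smul_eq_mul] at this
      rw [Matrix.mul_diagonal]
      simp only [Matrix.mul_apply, hVdef, Matrix.of_apply]
      rw [this]; ring
    calc B = B * (V * Vᴴ) := by rw [hVVh, mul_one]
    _ = (B * V) * Vᴴ := by rw [mul_assoc]
    _ = _ := by rw [hBV]
  have hHSd := hdiag HS s hvS
  have hAd := hdiag A a hvA
  -- the big unitary
  set W : Matrix (Fin n × Fin 2) (Fin n × Fin 2) ℂ :=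
    V ⊗ₖ (1 : Matrix (Fin 2) (Fin 2) ℂ) with hWdef
  have hWH : Wᴴ = Vᴴ ⊗ₖ (1 : Matrix (Fin 2) (Fin 2) ℂ) := by
    rw [hWdef, aux_kron_conjT, Matrix.conjTranspose_one]
  have hWWh : W * Wᴴ = 1 := by
    rw [hWdef, hWH, ← Matrix.mul_kronecker_mul, hVVh, Matrix.mul_one, Matrix.one_kronecker_one]
  have hWhW : Wᴴ * W = 1 := by
    rw [hWdef, hWH, ← Matrix.mul_kronecker_mul, hVhV, Matrix.mul_one, Matrix.one_kronecker_one]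
  have hWunit : IsUnit W := ⟨⟨W, Wᴴ, hWWh, hWhW⟩, rfl⟩
  have hWinv : W⁻¹ = Wᴴ := Matrix.inv_eq_right_inv hWWh
  -- diagonal forms of the 2x2 projections
  have hp0 : projE0 = Matrix.diagonal ![1, 0] := by
    ext i j; fin_cases i <;> fin_cases j <;> simp [projE0, Matrix.diagonal]
  have hp1 : projE1 = Matrix.diagonal ![0, 1] := by
    ext i j; fin_cases i <;> fin_cases j <;> simp [projE1, Matrix.diagonal]
  have hp1s : (δ : ℂ) • projE1 = Matrix.diagonal ![0, (δ:ℂ)] := by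
    rw [hp1, ← Matrix.diagonal_smul]
    refine congrArg Matrix.diagonal ?_
    funext k; fin_cases k <;> simp
  -- the diagonal representing H2 in the eigenbasis
  set d : Fin n × Fin 2 → ℂ :=
    fun p => if p.2 = 0 then (s p.1 : ℂ) else ((s p.1 : ℂ) + δ + a p.1) with hddef
  have hone2 : (1 : Matrix (Fin 2) (Fin 2) ℂ) = Matrix.diagonal (fun _ => 1) :=
    Matrix.diagonal_one.symm
  have honen : (1 : Matrix (Fin n) (Fin n) ℂ) = Matrix.diagonal (fun _ => 1) :=
    Matrix.diagonal_one.symm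
  have hDinner : Matrix.diagonal (fun j => (s j : ℂ)) ⊗ₖ (1 : Matrix (Fin 2) (Fin 2) ℂ)
      + (1 : Matrix (Fin n) (Fin n) ℂ) ⊗ₖ ((δ : ℂ) • projE1)
      + Matrix.diagonal (fun j => (a j : ℂ)) ⊗ₖ projE1 = Matrix.diagonal d := by
    rw [hp1s, hp1, hone2, honen, Matrix.diagonal_kronecker_diagonal,
      Matrix.diagonal_kronecker_diagonal, Matrix.diagonal_kronecker_diagonal,
      Matrix.diagonal_add, Matrix.diagonal_add]
    refine congrArg Matrix.diagonal ?_
    funext p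
    obtain ⟨j, k⟩ := p
    fin_cases k <;> simp [hddef]
  have hH2 : H2mat HS A δ = W * Matrix.diagonal d * Wᴴ := by
    have e1 : W * (Matrix.diagonal (fun j => (s j : ℂ)) ⊗ₖ (1 : Matrix (Fin 2) (Fin 2) ℂ)) * Wᴴ
        = HS ⊗ₖ (1 : Matrix (Fin 2) (Fin 2) ℂ) := by
      rw [hWdef, hWH, ← Matrix.mul_kronecker_mul, ← Matrix.mul_kronecker_mul,
        Matrix.one_mul, Matrix.mul_one, ← hHSd]
    have e2 : W * ((1 : Matrix (Fin n) (Fin n) ℂ) ⊗ₖ ((δ : ℂ) • projE1)) * Wᴴ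
        = (1 : Matrix (Fin n) (Fin n) ℂ) ⊗ₖ ((δ : ℂ) • projE1) := by
      rw [hWdef, hWH, ← Matrix.mul_kronecker_mul, ← Matrix.mul_kronecker_mul,
        Matrix.mul_one, Matrix.one_mul, Matrix.mul_one, hVVh]
    have e3 : W * (Matrix.diagonal (fun j => (a j : ℂ)) ⊗ₖ projE1) * Wᴴ
        = A ⊗ₖ projE1 := by
      rw [hWdef, hWH, ← Matrix.mul_kronecker_mul, ← Matrix.mul_kronecker_mul,
        Matrix.one_mul, Matrix.mul_one, ← hAd]
    rw [H2mat, ← e1, ← e2, ← e3, ← hDinner]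
    simp only [Matrix.mul_add, Matrix.add_mul]
  -- the exponential of -itH2
  have hexp : NormedSpace.exp ((-(Complex.I) * (t : ℂ)) • H2mat HS A δ)
      = W * Matrix.diagonal (fun p => Complex.exp ((-(Complex.I) * (t:ℂ)) * d p)) * Wᴴ := by
    rw [hH2]
    have hsm : (-(Complex.I) * (t:ℂ)) • (W * Matrix.diagonal d * Wᴴ)
        = W * ((-(Complex.I) * (t:ℂ)) • Matrix.diagonal d) * Wᴴ := by
      rw [Matrix.mul_smul, Matrix.smul_mul]
    rw [hsm, ← hWinv, Matrix.exp_conj W _ hWunit, ← Matrix.diagonal_smul,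
      Matrix.exp_diagonal, hWinv]
    congr 2
    rw [Pi.exp_def]
    funext p
    rw [← Complex.exp_eq_exp_ℂ]
    simp [smul_eq_mul]
  -- the two phase families
  set c0 : Fin n → ℂ := fun j => Complex.exp (-(Complex.I) * (t:ℂ) * (s j : ℂ)) with hc0
  set c1 : Fin n → ℂ :=
    fun j => Complex.exp (-(Complex.I) * (t:ℂ) * ((s j : ℂ) + δ + a j)) with hc1
  have hDt : Matrix.diagonal (fun p : Fin n × Fin 2 =>
        Complex.exp ((-(Complex.I) * (t:ℂ)) * d p))
      = Matrix.diagonal c0 ⊗ₖ projE0 + Matrix.diagonal c1 ⊗ₖ projE1 := by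
    rw [hp0, hp1, Matrix.diagonal_kronecker_diagonal, Matrix.diagonal_kronecker_diagonal,
      Matrix.diagonal_add]
    refine congrArg Matrix.diagonal ?_
    funext p
    obtain ⟨j, k⟩ := p
    fin_cases k <;> simp [hddef, hc0, hc1]
  -- the explicit 2x2 blocks
  set X0 : Matrix (Fin 2) (Fin 2) ℂ := !![(2:ℂ)⁻¹, (2:ℂ)⁻¹; (2:ℂ)⁻¹, (2:ℂ)⁻¹] with hX0d
  set X1 : Matrix (Fin 2) (Fin 2) ℂ := !![(2:ℂ)⁻¹, -(2:ℂ)⁻¹; -(2:ℂ)⁻¹, (2:ℂ)⁻¹] with hX1d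
  set M : Matrix (Fin n × Fin 2) (Fin n × Fin 2) ℂ :=
    Matrix.diagonal c0 ⊗ₖ X0 + Matrix.diagonal c1 ⊗ₖ X1 with hM
  set IH : Matrix (Fin n × Fin 2) (Fin n × Fin 2) ℂ :=
    (1 : Matrix (Fin n) (Fin n) ℂ) ⊗ₖ hadamard2 with hIH
  have hMeq : IH * (Matrix.diagonal c0 ⊗ₖ projE0 + Matrix.diagonal c1 ⊗ₖ projE1) * IH
      = M := by
    rw [hIH, hM]
    simp only [Matrix.mul_add, Matrix.add_mul, ← Matrix.mul_kronecker_mul,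
      Matrix.one_mul, Matrix.mul_one]
    rw [aux_X0, aux_X1, hX0d, hX1d]
  -- commutation of W with I ⊗ H and I ⊗ P0
  have hc1W : IH * W = W * IH := by
    rw [hIH, hWdef, ← Matrix.mul_kronecker_mul, ← Matrix.mul_kronecker_mul,
      Matrix.one_mul, Matrix.mul_one, Matrix.one_mul, Matrix.mul_one]
  have hc2W : Wᴴ * IH = IH * Wᴴ := by
    rw [hIH, hWH, ← Matrix.mul_kronecker_mul, ← Matrix.mul_kronecker_mul,
      Matrix.one_mul, Matrix.mul_one, Matrix.one_mul, Matrix.mul_one]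
  have hPW : ((1 : Matrix (Fin n) (Fin n) ℂ) ⊗ₖ projE0) * W
      = W * ((1 : Matrix (Fin n) (Fin n) ℂ) ⊗ₖ projE0) := by
    rw [hWdef, ← Matrix.mul_kronecker_mul, ← Matrix.mul_kronecker_mul,
      Matrix.one_mul, Matrix.mul_one, Matrix.one_mul, Matrix.mul_one]
  -- U(t) = W M Wᴴ
  have hU : Umat HS A δ t = W * M * Wᴴ := by
    rw [Umat, hexp, hDt, ← hIH, ← hMeq]
    calc IH * (W * (Matrix.diagonal c0 ⊗ₖ projE0 + Matrix.diagonal c1 ⊗ₖ projE1) * Wᴴ) * IH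
        = (IH * W) * ((Matrix.diagonal c0 ⊗ₖ projE0 + Matrix.diagonal c1 ⊗ₖ projE1)
            * (Wᴴ * IH)) := by simp only [Matrix.mul_assoc]
      _ = (W * IH) * ((Matrix.diagonal c0 ⊗ₖ projE0 + Matrix.diagonal c1 ⊗ₖ projE1)
            * (IH * Wᴴ)) := by rw [hc1W, hc2W]
      _ = W * (IH * (Matrix.diagonal c0 ⊗ₖ projE0 + Matrix.diagonal c1 ⊗ₖ projE1) * IH)
            * Wᴴ := by simp only [Matrix.mul_assoc]
  -- conjugate transpose of U(t)
  have hX0c : X0ᴴ = X0 := by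
    rw [hX0d]; ext i j; fin_cases i <;> fin_cases j <;>
      simp [Matrix.conjTranspose_apply]
  have hX1c : X1ᴴ = X1 := by
    rw [hX1d]; ext i j; fin_cases i <;> fin_cases j <;>
      simp [Matrix.conjTranspose_apply]
  have hMH : Mᴴ = Matrix.diagonal (star c0) ⊗ₖ X0 + Matrix.diagonal (star c1) ⊗ₖ X1 := by
    rw [hM, Matrix.conjTranspose_add, aux_kron_conjT, aux_kron_conjT,
      Matrix.diagonal_conjTranspose, Matrix.diagonal_conjTranspose, hX0c, hX1c]
  have hUH : (Umat HS A δ t)ᴴ = W * Mᴴ * Wᴴ := by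
    rw [hU]
    simp only [Matrix.conjTranspose_mul, Matrix.conjTranspose_conjTranspose,
      Matrix.mul_assoc]
  -- the initial probe state
  set g : Matrix (Fin 2) (Fin 2) ℂ := !![(aa : ℂ), 0; 0, 1 - (aa : ℂ)] with hg
  set R : Matrix (Fin n) (Fin n) ℂ := Vᴴ * ρS * V with hR
  have hρ'mat : Wᴴ * (ρS ⊗ₖ g) * W = R ⊗ₖ g := by
    rw [hWdef, hWH, ← Matrix.mul_kronecker_mul, ← Matrix.mul_kronecker_mul,
      Matrix.one_mul, Matrix.mul_one, hR]
  -- the main reduction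
  set P : Matrix (Fin n × Fin 2) (Fin n × Fin 2) ℂ :=
    (1 : Matrix (Fin n) (Fin n) ℂ) ⊗ₖ projE0 with hP
  have hmain : P * (Umat HS A δ t * (ρS ⊗ₖ g) * (Umat HS A δ t)ᴴ)
      = W * (P * M * (R ⊗ₖ g) * Mᴴ) * Wᴴ := by
    rw [hUH, hU, ← hρ'mat]
    simp only [← Matrix.mul_assoc]
    rw [hPW]
  -- compute the trace
  have hterm : ∀ (C C' : Matrix (Fin n) (Fin n) ℂ) (X X' : Matrix (Fin 2) (Fin 2) ℂ),
      P * (C ⊗ₖ X) * (R ⊗ₖ g) * (C' ⊗ₖ X')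
        = (C * R * C') ⊗ₖ (projE0 * X * g * X') := by
    intro C C' X X'
    rw [hP]
    simp only [← Matrix.mul_kronecker_mul, Matrix.one_mul]
  have htr : (P * (Umat HS A δ t * (ρS ⊗ₖ g) * (Umat HS A δ t)ᴴ)).trace
      = (P * M * (R ⊗ₖ g) * Mᴴ).trace := by
    rw [hmain, Matrix.trace_mul_cycle, hWhW, Matrix.one_mul]
  -- the four 2x2 traces
  have hτ00 : (projE0 * X0 * g * X0).trace = (4:ℂ)⁻¹ := by
    rw [hX0d, hg]
    simp [projE0, Matrix.trace_fin_two, Matrix.mul_apply, Fin.sum_univ_two]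
    ring
  have hτ01 : (projE0 * X0 * g * X1).trace = (2*(aa:ℂ)-1)/4 := by
    rw [hX0d, hX1d, hg]
    simp [projE0, Matrix.trace_fin_two, Matrix.mul_apply, Fin.sum_univ_two]
    ring
  have hτ10 : (projE0 * X1 * g * X0).trace = (2*(aa:ℂ)-1)/4 := by
    rw [hX0d, hX1d, hg]
    simp [projE0, Matrix.trace_fin_two, Matrix.mul_apply, Fin.sum_univ_two]
    ring
  have hτ11 : (projE0 * X1 * g * X1).trace = (4:ℂ)⁻¹ := by
    rw [hX1d, hg]
    simp [projE0, Matrix.trace_fin_two, Matrix.mul_apply, Fin.sum_univ_two]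
    ring
  have hZ : (P * M * (R ⊗ₖ g) * Mᴴ).trace
      = (∑ j, c0 j * R j j * star c0 j) * (4:ℂ)⁻¹
        + (∑ j, c0 j * R j j * star c1 j) * ((2*(aa:ℂ)-1)/4)
        + (∑ j, c1 j * R j j * star c0 j) * ((2*(aa:ℂ)-1)/4)
        + (∑ j, c1 j * R j j * star c1 j) * (4:ℂ)⁻¹ := by
    rw [hM, hMH]
    simp only [Matrix.mul_add, Matrix.add_mul, hterm]
    simp only [Matrix.trace_add, Matrix.trace_kronecker]
    rw [hτ00, hτ01, hτ10, hτ11, aux_trace_dmd, aux_trace_dmd, aux_trace_dmd, aux_trace_dmd]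
    ring
  -- diagonal entries of R
  have hRjj : ∀ j, R j j = star (v j) ⬝ᵥ ρS.mulVec (v j) := by
    intro j
    rw [hR]
    simp only [Matrix.mul_apply, Matrix.conjTranspose_apply, dotProduct, Matrix.mulVec,
      hVdef, Matrix.of_apply, Pi.star_apply, Finset.sum_mul, Finset.mul_sum]
    rw [Finset.sum_comm]
    exact Finset.sum_congr rfl fun i _ => Finset.sum_congr rfl fun k _ => by ring
  have hsumR : ∑ j, R j j = 1 := by
    have h1 : ∑ j, R j j = R.trace := by simp [Matrix.trace, Matrix.diag]
    rw [h1, hR, Matrix.trace_mul_cycle, hVVh, Matrix.one_mul, hρtr]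
  -- phase identities
  have e00 : ∀ j, c0 j * star (c0 j) = 1 := by
    intro j
    simp only [hc0]
    rw [aux_exp_mul_star]
    have h : -(Complex.I) * (t:ℂ) * ((s j:ℝ):ℂ) + star (-(Complex.I) * (t:ℂ) * ((s j:ℝ):ℂ))
        = 0 := by
      simp only [Complex.star_def, _root_.map_mul, _root_.map_neg, Complex.conj_I,
        Complex.conj_ofReal]
      ring
    rw [h, Complex.exp_zero]
  have e11 : ∀ j, c1 j * star (c1 j) = 1 := by
    intro j
    simp only [hc1]
    rw [aux_exp_mul_star]
    have h : -(Complex.I) * (t:ℂ) * (((s j:ℝ):ℂ) + δ + a j)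
        + star (-(Complex.I) * (t:ℂ) * (((s j:ℝ):ℂ) + δ + a j)) = 0 := by
      simp only [Complex.star_def, _root_.map_mul, _root_.map_neg, _root_.map_add,
        Complex.conj_I, Complex.conj_ofReal]
      ring
    rw [h, Complex.exp_zero]
  have e01 : ∀ j, c0 j * star (c1 j)
      = Complex.exp ((((a j + δ) * t : ℝ) : ℂ) * Complex.I) := by
    intro j
    simp only [hc0, hc1]
    rw [aux_exp_mul_star]
    congr 1
    simp only [Complex.star_def, _root_.map_mul, _root_.map_neg, _root_.map_add,
      Complex.conj_I, Complex.conj_ofReal]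
    push_cast
    ring
  have e10 : ∀ j, c1 j * star (c0 j)
      = Complex.exp (-(((a j + δ) * t : ℝ) : ℂ) * Complex.I) := by
    intro j
    simp only [hc0, hc1]
    rw [aux_exp_mul_star]
    congr 1
    simp only [Complex.star_def, _root_.map_mul, _root_.map_neg, _root_.map_add,
      Complex.conj_I, Complex.conj_ofReal]
    push_cast
    ring
  have ecos : ∀ j, Complex.exp ((((a j + δ) * t : ℝ) : ℂ) * Complex.I)
      + Complex.exp (-(((a j + δ) * t : ℝ) : ℂ) * Complex.I)
      = 2 * ((Real.cos ((a j + δ) * t) : ℝ) : ℂ) := by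
    intro j
    rw [Complex.ofReal_cos]
    exact (Complex.two_cos _).symm
  -- final assembly
  rw [htr, hZ]
  have hdotR : ∀ j, (star (v j) ⬝ᵥ ρS.mulVec (v j)) = R j j := fun j => (hRjj j).symm
  simp only [hdotR]
  rw [Finset.sum_mul, Finset.sum_mul, Finset.sum_mul, Finset.sum_mul,
    ← Finset.sum_add_distrib, ← Finset.sum_add_distrib, ← Finset.sum_add_distrib]
  have hRHS : (1/2:ℂ) * (1 + ((2*aa - 1:ℝ):ℂ)
        * ∑ j, R j j * ((Real.cos ((a j + δ)*t):ℝ):ℂ))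
      = ∑ j, (R j j * (2:ℂ)⁻¹
          + ((2*aa-1:ℝ):ℂ) * 2⁻¹ * (R j j * ((Real.cos ((a j + δ)*t):ℝ):ℂ))) := by
    rw [Finset.sum_add_distrib, ← Finset.sum_mul, hsumR, ← Finset.mul_sum]
    ring
  rw [hRHS]
  apply Finset.sum_congr rfl
  intro j _
  push_cast [-Complex.ofReal_cos]
  linear_combination (R j j / 4) * e00 j + (R j j * ((2*(aa:ℂ)-1)/4)) * e01 j
    + (R j j * ((2*(aa:ℂ)-1)/4)) * e10 j + (R j j / 4) * e11 j
    + (R j j * ((2*(aa:ℂ)-1)/4)) * ecos j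
end
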